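/- arXiv:1805.09247 — 2 statements merged into one kernel-verified Lean document; each statement's English description precedes it below -/
import Mathlib

section
/- Let K, E ≥ 2 be integers and L ∈ [0,1]^{K×E} a loss matrix with rows ℓ_a. Let K_loc be the maximal size of a subset A ⊆ [K] with ⋂_{a∈A} C_a ≠ ∅. Then there exists ε > 0 such that for every u ∈ 𝒫_{E−1}, the set M_u = {a ∈ [K] : ⟨ℓ_a, u⟩ − min_{b∈[K]} ⟨ℓ_b, u⟩ < ε} consists of actions that are pairwise weak neighbors and satisfies |M_u| ≤ K_loc. -/
open scoped BigOperators

/-- The probability simplex in `ℝ^E`. -/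
def probSimplex (E : ℕ) : Set (Fin E → ℝ) :=
  {u | (∀ i, 0 ≤ u i ∧ u i ≤ 1) ∧ ∑ i, u i = 1}

/-- The cell of action `a`: the set of distributions on which `a` is optimal. -/
def cell {K E : ℕ} (L : Fin K → Fin E → ℝ) (a : Fin K) : Set (Fin E → ℝ) :=
  {u | u ∈ probSimplex E ∧ ∀ b, ∑ i, L a i * u i ≤ ∑ i, L b i * u i}

/-- `min_{c ∈ [K]} ⟨ℓ_c, u⟩`. -/
noncomputable def minLoss {K E : ℕ} (L : Fin K → Fin E → ℝ) (u : Fin E → ℝ) : ℝ :=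
  ⨅ c : Fin K, ∑ i, L c i * u i

section aux
variable {K E : ℕ}

lemma minLoss_eq_inf' [NeZero K] (L : Fin K → Fin E → ℝ) (u : Fin E → ℝ) :
    minLoss L u = Finset.univ.inf' Finset.univ_nonempty (fun c => ∑ i, L c i * u i) := by
  rw [minLoss, ← Finset.inf'_univ_eq_ciInf]

lemma minLoss_le [NeZero K] (L : Fin K → Fin E → ℝ) (u : Fin E → ℝ) (a : Fin K) :
    minLoss L u ≤ ∑ i, L a i * u i := by
  rw [minLoss_eq_inf']
  exact Finset.inf'_le _ (Finset.mem_univ a)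

lemma probSimplex_eq (E : ℕ) : probSimplex E = stdSimplex ℝ (Fin E) := by
  ext u
  constructor
  · rintro ⟨h1, h2⟩; exact ⟨fun i => (h1 i).1, h2⟩
  · rintro ⟨h1, h2⟩
    refine ⟨fun i => ⟨h1 i, ?_⟩, h2⟩
    calc u i ≤ ∑ j, u j := Finset.single_le_sum (fun j _ => h1 j) (Finset.mem_univ i)
    _ = 1 := h2

lemma mem_cell_iff [NeZero K] (L : Fin K → Fin E → ℝ) (u : Fin E → ℝ)
    (hu : u ∈ probSimplex E) (a : Fin K) :
    u ∈ cell L a ↔ (∑ i, L a i * u i) - minLoss L u = 0 := by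
  constructor
  · rintro ⟨-, h⟩
    have : (∑ i, L a i * u i) ≤ minLoss L u := by
      rw [minLoss_eq_inf']
      exact Finset.le_inf' _ _ fun b _ => h b
    linarith [minLoss_le L u a]
  · intro h
    refine ⟨hu, fun b => ?_⟩
    have := minLoss_le L u b
    linarith

end aux

theorem stmt5 {K E : ℕ} (hK : 2 ≤ K) (hE : 2 ≤ E)
    (L : Fin K → Fin E → ℝ) (hL : ∀ a i, L a i ∈ Set.Icc (0 : ℝ) 1)
    (Kloc : ℕ)
    (hKloc1 : ∃ A : Finset (Fin K), (∃ u, ∀ a ∈ A, u ∈ cell L a) ∧ A.card = Kloc)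
    (hKloc2 : ∀ A : Finset (Fin K), (∃ u, ∀ a ∈ A, u ∈ cell L a) → A.card ≤ Kloc) :
    ∃ ε > (0 : ℝ), ∀ u ∈ probSimplex E,
      (∀ a b : Fin K,
        (∑ i, L a i * u i) - minLoss L u < ε →
        (∑ i, L b i * u i) - minLoss L u < ε →
        (cell L a ∩ cell L b).Nonempty) ∧
      {a : Fin K | (∑ i, L a i * u i) - minLoss L u < ε}.ncard ≤ Kloc := by
  haveI : NeZero K := ⟨by omega⟩
  haveI : NeZero E := ⟨by omega⟩
  have hcomp : IsCompact (probSimplex E) := by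
    rw [probSimplex_eq]; exact isCompact_stdSimplex _ _
  have hne : (probSimplex E).Nonempty := by
    rw [probSimplex_eq]
    refine ⟨Pi.single 0 1, fun i => ?_, by simp [Pi.single_apply]⟩
    rcases eq_or_ne i 0 with h | h <;> simp [Pi.single_apply, h]
  set gap : Fin K → (Fin E → ℝ) → ℝ := fun a u => (∑ i, L a i * u i) - minLoss L u with hgap
  have hcont : ∀ a, Continuous (gap a) := by
    intro a
    have h1 : ∀ c : Fin K, Continuous (fun u : Fin E → ℝ => ∑ i, L c i * u i) := fun c =>
      continuous_finset_sum _ fun i _ => continuous_const.mul (continuous_apply i)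
    have h2 : Continuous (fun u => minLoss L u) := by
      have : (fun u : Fin E → ℝ => minLoss L u) = fun u =>
          Finset.univ.inf' Finset.univ_nonempty (fun c : Fin K => ∑ i, L c i * u i) := by
        funext u; exact minLoss_eq_inf' L u
      rw [this]
      exact Continuous.finset_inf'_apply Finset.univ_nonempty fun c _ => h1 c
    exact (h1 a).sub h2
  have hgap0 : ∀ a u, 0 ≤ gap a u := fun a u => by
    simpa [hgap] using minLoss_le L u a
  -- For each bad nonempty subset S, a positive lower bound on the max gap over S.
  have key : ∀ S : Finset (Fin K), ∀ hS : S.Nonempty, (¬ ∃ w, ∀ a ∈ S, w ∈ cell L a) →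
      ∃ δ > (0:ℝ), ∀ u ∈ probSimplex E, δ ≤ S.sup' hS (fun a => gap a u) := by
    intro S hS hbad
    have hfc : ContinuousOn (fun u => S.sup' hS (fun a => gap a u)) (probSimplex E) :=
      (Continuous.finset_sup'_apply hS fun a _ => hcont a).continuousOn
    obtain ⟨u0, hu0, hmin⟩ := hcomp.exists_isMinOn hne hfc
    refine ⟨S.sup' hS (fun a => gap a u0), ?_, fun u hu => hmin hu⟩
    by_contra hpos
    push_neg at hpos
    apply hbad
    refine ⟨u0, fun a ha => ?_⟩
    rw [mem_cell_iff L u0 hu0 a]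
    have h1 : gap a u0 ≤ 0 := (Finset.le_sup' (fun a => gap a u0) ha).trans hpos
    have := hgap0 a u0
    have : gap a u0 = 0 := le_antisymm h1 this
    simpa [hgap] using this
  -- Choose one δ for each subset of actions.
  choose! delta hdelta_pos hdelta using key
  classical
  set e : Finset (Fin K) → ℝ := fun S =>
    if h : S.Nonempty ∧ ¬ ∃ w, ∀ a ∈ S, w ∈ cell L a then delta S else 1 with he
  have he_pos : ∀ S, 0 < e S := by
    intro S
    simp only [he]
    split
    · next h => exact hdelta_pos S h.1 h.2
    · norm_num
  have hfin : (Finset.univ : Finset (Finset (Fin K))).Nonempty := Finset.univ_nonempty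
  refine ⟨Finset.univ.inf' hfin e, ?_, ?_⟩
  · rw [gt_iff_lt, Finset.lt_inf'_iff]
    exact fun S _ => he_pos S
  intro u hu
  -- the set of near-optimal actions
  set M : Finset (Fin K) := Finset.univ.filter (fun a => gap a u < Finset.univ.inf' hfin e)
    with hM
  -- the cells of actions in M have a common point
  have hMgood : ∃ w, ∀ a ∈ M, w ∈ cell L a := by
    by_contra hbad
    have hMne : M.Nonempty := by
      rcases Finset.eq_empty_or_nonempty M with h | h
      · exact absurd ⟨0, by simp [h]⟩ hbad
      · exact h
    have h1 : Finset.univ.inf' hfin e ≤ e M := Finset.inf'_le _ (Finset.mem_univ M)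
    have h2 : e M ≤ M.sup' hMne (fun a => gap a u) := by
      simp only [he]
      rw [dif_pos ⟨hMne, hbad⟩]
      exact hdelta M hMne hbad u hu
    obtain ⟨a, ha, hsup⟩ := Finset.exists_mem_eq_sup' hMne (fun a => gap a u)
    have : gap a u < Finset.univ.inf' hfin e := (Finset.mem_filter.mp ha).2
    rw [hsup] at h2
    linarith
  obtain ⟨w, hw⟩ := hMgood
  constructor
  · intro a b ha hb
    exact ⟨w, hw a (Finset.mem_filter.mpr ⟨Finset.mem_univ a, ha⟩),
      hw b (Finset.mem_filter.mpr ⟨Finset.mem_univ b, hb⟩)⟩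
  · have hset : {a : Fin K | (∑ i, L a i * u i) - minLoss L u < Finset.univ.inf' hfin e}
        = (M : Set (Fin K)) := by
      ext a
      simp only [hM, Finset.coe_filter, Finset.mem_univ, true_and, Set.mem_setOf_eq]
      exact Iff.rfl
    rw [hset, Set.ncard_coe_finset]
    exact hKloc2 M ⟨w, hw⟩
end

section
/- Let X be a square-integrable real random variable and η > 0 be such that η·X ≤ 1 almost surely. Let μ = E[X] and σ² = E[X²]. Then E[ exp( η·(X − μ − η·σ²) ) ] ≤ 1. -/
open MeasureTheory

lemma exp_le_quadratic {x : ℝ} (hx : x ≤ 1) : Real.exp x ≤ 1 + x + x ^ 2 := by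
  rcases le_or_gt x 0 with h | h
  · have h1 : 0 < 1 - x := by linarith
    have h2 : Real.exp x ≤ 1 / (1 - x) := by
      rw [le_div_iff₀ h1]
      have := Real.add_one_le_exp (-x)
      calc Real.exp x * (1 - x) ≤ Real.exp x * Real.exp (-x) := by
            have hpos := Real.exp_pos x
            nlinarith
        _ = 1 := by rw [← Real.exp_add]; simp
    refine h2.trans ?_
    rw [div_le_iff₀ h1]
    nlinarith
  · have hsum : ∑ m ∈ Finset.range 3, x ^ m / (m.factorial : ℝ) = 1 + x + x ^ 2 / 2 := by
      rw [Finset.sum_range_succ, Finset.sum_range_succ, Finset.sum_range_one]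
      norm_num [Nat.factorial]
    calc Real.exp x ≤ _ := Real.exp_bound' h.le hx zero_lt_three
      _ ≤ 1 + x + x ^ 2 := by
        rw [hsum]
        norm_num [Nat.factorial]
        nlinarith

theorem stmt9
    {Ω : Type*} {mΩ : MeasurableSpace Ω} (μ : Measure Ω) [IsProbabilityMeasure μ]
    (X : Ω → ℝ) (hXmeas : Measurable X)
    (hL2 : Integrable (fun ω => (X ω) ^ 2) μ)
    (η : ℝ) (hη : 0 < η)
    (hbd : ∀ᵐ ω ∂μ, η * X ω ≤ 1) :
    ∫ ω, Real.exp (η * (X ω - (∫ ω', X ω' ∂μ) - η * ∫ ω', (X ω') ^ 2 ∂μ)) ∂μ ≤ 1 := by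
  set m := ∫ ω', X ω' ∂μ with hm
  set s := ∫ ω', (X ω') ^ 2 ∂μ with hs
  have hX : Integrable X μ := by
    refine Integrable.mono' (((integrable_const (1:ℝ)).add hL2).div_const 2)
      hXmeas.aestronglyMeasurable (Filter.Eventually.of_forall fun ω => ?_)
    simp only [Pi.add_apply, Pi.div_apply, Real.norm_eq_abs]
    nlinarith [sq_nonneg (|X ω| - 1), sq_abs (X ω)]
  have hg : Integrable (fun ω => 1 + η * X ω + η ^ 2 * (X ω) ^ 2) μ :=
    ((integrable_const (1:ℝ)).add (hX.const_mul η)).add (hL2.const_mul (η ^ 2))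
  have hptwise : ∀ᵐ ω ∂μ, Real.exp (η * X ω) ≤ 1 + η * X ω + η ^ 2 * (X ω) ^ 2 := by
    filter_upwards [hbd] with ω hω
    calc Real.exp (η * X ω) ≤ 1 + η * X ω + (η * X ω) ^ 2 := exp_le_quadratic hω
      _ = 1 + η * X ω + η ^ 2 * (X ω) ^ 2 := by ring
  have hexpInt : Integrable (fun ω => Real.exp (η * X ω)) μ := by
    refine Integrable.mono' hg
      ((hXmeas.const_mul η).exp.aestronglyMeasurable) ?_
    filter_upwards [hptwise] with ω hω
    rw [Real.norm_eq_abs, abs_of_pos (Real.exp_pos _)]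
    exact hω
  have key : ∫ ω, Real.exp (η * X ω) ∂μ ≤ 1 + η * m + η ^ 2 * s := by
    calc ∫ ω, Real.exp (η * X ω) ∂μ
        ≤ ∫ ω, (1 + η * X ω + η ^ 2 * (X ω) ^ 2) ∂μ :=
          integral_mono_ae hexpInt hg hptwise
      _ = 1 + η * m + η ^ 2 * s := by
          have hg1 : Integrable (fun ω => 1 + η * X ω) μ :=
            (integrable_const (1:ℝ)).add (hX.const_mul η)
          have hg2 : Integrable (fun ω => η ^ 2 * (X ω) ^ 2) μ := hL2.const_mul (η ^ 2)
          have hc : Integrable (fun _ : Ω => (1:ℝ)) μ := integrable_const 1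
          have hlin : Integrable (fun ω => η * X ω) μ := hX.const_mul η
          rw [integral_add hg1 hg2, integral_add hc hlin,
            integral_const, integral_const_mul, integral_const_mul]
          simp [hm, hs]
  have hsplit : (fun ω => Real.exp (η * (X ω - m - η * s)))
      = fun ω => Real.exp (η * X ω) * Real.exp (η * (-m - η * s)) := by
    funext ω
    rw [← Real.exp_add]
    ring_nf
  rw [hsplit, integral_mul_const]
  have h2 : (1 : ℝ) + η * m + η ^ 2 * s ≤ Real.exp (η * m + η ^ 2 * s) := by
    have := Real.add_one_le_exp (η * m + η ^ 2 * s)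
    linarith
  calc (∫ ω, Real.exp (η * X ω) ∂μ) * Real.exp (η * (-m - η * s))
      ≤ Real.exp (η * m + η ^ 2 * s) * Real.exp (η * (-m - η * s)) := by
        apply mul_le_mul_of_nonneg_right (key.trans h2) (Real.exp_pos _).le
    _ = 1 := by rw [← Real.exp_add]; ring_nf; exact Real.exp_zero
end
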